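/- Assume k ≤ LR and k − 1 ≤ LR. Then MC(π^(k)) ≤ MC(π) for every selected node distribution s with s_0 ∈ {0, 1} and every cluster order π ∈ Π(s). That is, in a CSN-DSS with one separate node the system capacity equals MC(π^(k)) = Σ_{i=1}^k min(α, w_i(π^(k))), achieved by placing the separate selected node last. -/

import Mathlib

/-- Relative location `h_π(i) = #{1 ≤ j ≤ i : π j = π i}`. -/
def relLoc (π : ℕ → ℕ) (i : ℕ) : ℕ :=
  ((Finset.Icc 1 i).filter (fun j => π j = π i)).card

/-- Intra-cluster coefficient `a_i(π) = d_I + 1 − h_π(i)` (truncated subtraction). -/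
def aCoef (dI : ℕ) (π : ℕ → ℕ) (i : ℕ) : ℕ :=
  dI + 1 - relLoc π i

/-- Cross-cluster coefficient `b_i(π) = max(0, d_C − (i − h_π(i)))` (truncated subtraction). -/
def bCoef (dC : ℕ) (π : ℕ → ℕ) (i : ℕ) : ℕ :=
  dC - (i - relLoc π i)

/-- Part incoming weight `w_i(π)`: for a separate position (`π i = 0`) it is
`(d_I + d_C + 1 − i)·β_C`, otherwise `a_i(π)·β_I + b_i(π)·β_C`. -/
noncomputable def weight (dI dC : ℕ) (βI βC : ℝ) (π : ℕ → ℕ) (i : ℕ) : ℝ :=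
  if π i = 0 then ((dI + dC + 1 - i : ℕ) : ℝ) * βC
  else (aCoef dI π i : ℝ) * βI + (bCoef dC π i : ℝ) * βC

/-- Min-cut `MC(π) = Σ_{i=1}^k min(α, w_i(π))`. -/
noncomputable def MC (k dI dC : ℕ) (βI βC α : ℝ) (π : ℕ → ℕ) : ℝ :=
  ∑ i ∈ Finset.Icc 1 k, min α (weight dI dC βI βC π i)

/-- A cluster order: a `k`-tuple with entries in `{0, 1, …, L}`. -/
def IsClusterOrder (L k : ℕ) (π : ℕ → ℕ) : Prop :=
  ∀ i, 1 ≤ i → i ≤ k → π i ≤ L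

/-- A selected node distribution `(s_0, s_1, …, s_L)`:
`R ≥ s_1 ≥ s_2 ≥ … ≥ s_L` and `s_0 + s_1 + … + s_L = k`. -/
def IsDist (L R k : ℕ) (s : ℕ → ℕ) : Prop :=
  (∀ i, 1 ≤ i → i + 1 ≤ L → s (i + 1) ≤ s i) ∧
  (∀ i, 1 ≤ i → i ≤ L → s i ≤ R) ∧
  ∑ i ∈ Finset.range (L + 1), s i = k

/-- `π ∈ Π(s)`: `π` is a cluster order with `#{1 ≤ j ≤ k : π j = c} = s c` for all `0 ≤ c ≤ L`. -/
def MemPi (L k : ℕ) (s : ℕ → ℕ) (π : ℕ → ℕ) : Prop :=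
  IsClusterOrder L k π ∧
  ∀ c, c ≤ L → ((Finset.Icc 1 k).filter (fun j => π j = c)).card = s c

/-- Vertical order of distribution `s` (possibly with separate entries, whose positions are
not constrained here):  over the cluster positions (`π i ≠ 0`) in increasing order, relative
locations are nondecreasing, with ties broken by increasing cluster index. -/
def IsVerticalOrder (L k : ℕ) (s : ℕ → ℕ) (π : ℕ → ℕ) : Prop :=
  MemPi L k s π ∧
  ∀ i j, 1 ≤ i → i < j → j ≤ k → π i ≠ 0 → π j ≠ 0 →
    relLoc π i ≤ relLoc π j ∧ (relLoc π i = relLoc π j → π i < π j)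

/-- The distribution `s*` (no separate node): `s*_0 = 0`, `s*_i = R` for `1 ≤ i ≤ ⌊k/R⌋`,
`s*_{⌊k/R⌋+1} = k − ⌊k/R⌋·R`, and `0` beyond. -/
def sStar0 (R k : ℕ) : ℕ → ℕ := fun i =>
  if i = 0 then 0
  else if i ≤ k / R then R
  else if i = k / R + 1 then k - k / R * R
  else 0

/-- The distribution with one separate node: `s_0 = 1`, `s_i = R` for `1 ≤ i ≤ ⌊(k−1)/R⌋`,
`s_{⌊(k−1)/R⌋+1} = (k−1) − ⌊(k−1)/R⌋·R`, and `0` beyond. -/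
def sStar1 (R k : ℕ) : ℕ → ℕ := fun i =>
  if i = 0 then 1
  else if i ≤ (k - 1) / R then R
  else if i = (k - 1) / R + 1 then (k - 1) - (k - 1) / R * R
  else 0

/-- `π^(j)`: the cluster order with exactly one separate entry, located at position `j`,
whose cluster entries form the vertical order of the distribution `sStar1 R k`. -/
def IsPiJ (L R k j : ℕ) (π : ℕ → ℕ) : Prop :=
  π j = 0 ∧ IsVerticalOrder L k (sStar1 R k) π

open Finset


lemma relLoc_pos (π : ℕ → ℕ) {i : ℕ} (hi : 1 ≤ i) : 1 ≤ relLoc π i := by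
  have h : i ∈ (Finset.Icc 1 i).filter (fun j => π j = π i) := by
    simp [Finset.mem_Icc, hi]
  exact Finset.card_pos.mpr ⟨i, h⟩

lemma relLoc_le_self (π : ℕ → ℕ) (i : ℕ) : relLoc π i ≤ i := by
  have := Finset.card_filter_le (Finset.Icc 1 i) (fun j => π j = π i)
  simpa [relLoc] using this

lemma relLoc_strictmono (π : ℕ → ℕ) {i j : ℕ} (hi : 1 ≤ i) (hij : i < j) (hc : π i = π j) :
    relLoc π i < relLoc π j := by
  unfold relLoc
  rw [hc]
  apply Finset.card_lt_card
  rw [Finset.ssubset_def]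
  constructor
  · intro x hx
    simp only [Finset.mem_filter, Finset.mem_Icc] at hx ⊢
    exact ⟨⟨hx.1.1, hx.1.2.trans hij.le⟩, hx.2⟩
  · intro hsub
    have hj : j ∈ (Finset.Icc 1 j).filter (fun j' => π j' = π j) := by
      simp [Finset.mem_Icc, hi.trans hij.le]
    have := hsub hj
    simp only [Finset.mem_filter, Finset.mem_Icc] at this
    omega

lemma relLoc_le_count (π : ℕ → ℕ) {i k : ℕ} (hik : i ≤ k) :
    relLoc π i ≤ ((Finset.Icc 1 k).filter (fun j => π j = π i)).card := by
  apply Finset.card_le_card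
  intro x hx
  simp only [Finset.mem_filter, Finset.mem_Icc] at hx ⊢
  exact ⟨⟨hx.1.1, hx.1.2.trans hik⟩, hx.2⟩

/-- count of occurrences of cluster `c` in `S` with relLoc ≥ t is at most `n_c + 1 - t`. -/
lemma count_relLoc_ge_le (π : ℕ → ℕ) (k c t : ℕ) (S : Finset ℕ) (hS : S ⊆ Finset.Icc 1 k) :
    (S.filter (fun i => π i = c ∧ t ≤ relLoc π i)).card
      ≤ ((Finset.Icc 1 k).filter (fun j => π j = c)).card + 1 - t := by
  set n := ((Finset.Icc 1 k).filter (fun j => π j = c)).card with hn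
  have hmap : ∀ i ∈ S.filter (fun i => π i = c ∧ t ≤ relLoc π i),
      relLoc π i ∈ Finset.Icc t n := by
    intro i hi
    simp only [Finset.mem_filter] at hi
    have hik := Finset.mem_Icc.mp (hS hi.1)
    refine Finset.mem_Icc.mpr ⟨hi.2.2, ?_⟩
    have := relLoc_le_count π (k := k) hik.2
    rwa [hi.2.1] at this
  have hinj : ∀ i ∈ S.filter (fun i => π i = c ∧ t ≤ relLoc π i),
      ∀ j ∈ S.filter (fun i => π i = c ∧ t ≤ relLoc π i),
      relLoc π i = relLoc π j → i = j := by
    intro i hi j hj hrel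
    simp only [Finset.mem_filter] at hi hj
    have hik := Finset.mem_Icc.mp (hS hi.1)
    have hjk := Finset.mem_Icc.mp (hS hj.1)
    by_contra hne
    rcases Nat.lt_or_ge i j with h | h
    · exact absurd hrel (Nat.ne_of_lt (relLoc_strictmono π hik.1 h (hi.2.1.trans hj.2.1.symm)))
    · have h' : j < i := by omega
      exact absurd hrel.symm (Nat.ne_of_lt (relLoc_strictmono π hjk.1 h' (hj.2.1.trans hi.2.1.symm)))
  calc (S.filter (fun i => π i = c ∧ t ≤ relLoc π i)).card
      ≤ (Finset.Icc t n).card := Finset.card_le_card_of_injOn _ hmap hinj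
    _ = n + 1 - t := by rw [Nat.card_Icc]


/-- exact count over the full window. -/
lemma count_relLoc_ge_eq (π : ℕ → ℕ) (k c t : ℕ) (ht : 1 ≤ t) :
    ((Finset.Icc 1 k).filter (fun i => π i = c ∧ t ≤ relLoc π i)).card
      = ((Finset.Icc 1 k).filter (fun j => π j = c)).card + 1 - t := by
  classical
  set O := (Finset.Icc 1 k).filter (fun j => π j = c) with hO
  set n := O.card with hn
  have hinj : Set.InjOn (relLoc π) O := by
    intro i hi j hj hrel
    simp only [hO, Finset.mem_filter, Finset.mem_Icc, Finset.coe_filter, Set.mem_setOf_eq] at hi hj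
    by_contra hne
    rcases Nat.lt_or_ge i j with h | h
    · exact absurd hrel (Nat.ne_of_lt (relLoc_strictmono π hi.1.1 h (hi.2.trans hj.2.symm)))
    · have h' : j < i := by omega
      exact absurd hrel.symm (Nat.ne_of_lt (relLoc_strictmono π hj.1.1 h' (hj.2.trans hi.2.symm)))
  have himg : O.image (relLoc π) = Finset.Icc 1 n := by
    apply Finset.eq_of_subset_of_card_le
    · intro v hv
      rcases Finset.mem_image.mp hv with ⟨i, hi, rfl⟩
      simp only [hO, Finset.mem_filter, Finset.mem_Icc] at hi
      refine Finset.mem_Icc.mpr ⟨relLoc_pos π hi.1.1, ?_⟩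
      have := relLoc_le_count π (k := k) hi.1.2
      rwa [hi.2] at this
    · rw [Nat.card_Icc, Finset.card_image_of_injOn hinj]
      omega
  have hsplit : (Finset.Icc 1 k).filter (fun i => π i = c ∧ t ≤ relLoc π i)
      = O.filter (fun i => t ≤ relLoc π i) := by
    rw [hO, Finset.filter_filter]
  rw [hsplit]
  have h2 : (O.filter (fun i => t ≤ relLoc π i)).card
      = ((O.image (relLoc π)).filter (fun v => t ≤ v)).card := by
    rw [Finset.filter_image]
    rw [Finset.card_image_of_injOn (hinj.mono (by
      intro x hx
      simp only [Finset.coe_filter, Set.mem_setOf_eq, Finset.mem_coe] at hx ⊢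
      exact hx.1))]
  rw [h2, himg]
  have : (Finset.Icc 1 n).filter (fun v => t ≤ v) = Finset.Icc t n := by
    ext v
    simp only [Finset.mem_filter, Finset.mem_Icc]
    omega
  rw [this, Nat.card_Icc]

/-- double counting swap -/
lemma sum_card_swap (S T : Finset ℕ) (p : ℕ → ℕ → Prop) [∀ i v, Decidable (p i v)] :
    ∑ i ∈ S, (T.filter (fun v => p i v)).card = ∑ v ∈ T, (S.filter (fun i => p i v)).card := by
  simp only [Finset.card_filter]
  exact Finset.sum_comm

/-- partition a count into cluster fibers -/
lemma card_filter_fiber (π : ℕ → ℕ) (L k t : ℕ) (S : Finset ℕ) (hS : S ⊆ Finset.Icc 1 k)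
    (hπ : ∀ i, 1 ≤ i → i ≤ k → π i ≤ L) :
    (S.filter (fun i => π i ≠ 0 ∧ t ≤ relLoc π i)).card
      = ∑ c ∈ Finset.Icc 1 L, (S.filter (fun i => π i = c ∧ t ≤ relLoc π i)).card := by
  classical
  have hmem : ∀ i ∈ S.filter (fun i => π i ≠ 0 ∧ t ≤ relLoc π i), π i ∈ Finset.Icc 1 L := by
    intro i hi
    simp only [Finset.mem_filter] at hi
    have hik := Finset.mem_Icc.mp (hS hi.1)
    exact Finset.mem_Icc.mpr ⟨Nat.one_le_iff_ne_zero.mpr hi.2.1, hπ i hik.1 hik.2⟩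
  rw [Finset.card_eq_sum_card_fiberwise hmem]
  apply Finset.sum_congr rfl
  intro c hc
  congr 1
  rw [Finset.filter_filter]
  apply Finset.filter_congr
  intro i _
  simp only [Finset.mem_Icc] at hc
  constructor
  · rintro ⟨⟨_, hrt⟩, hcc⟩
    exact ⟨hcc, hrt⟩
  · rintro ⟨hcc, hrt⟩
    exact ⟨⟨by omega, hrt⟩, hcc⟩

/-- the abar + column-count identity. -/
lemma abar_identity (π : ℕ → ℕ) (dI R k : ℕ) (hRdI : R = dI + 1) (S : Finset ℕ)
    (hh : ∀ i ∈ S, π i ≠ 0 → (1 ≤ relLoc π i ∧ relLoc π i ≤ R)) :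
    ∑ i ∈ S, (if π i = 0 then 0 else (dI + 1 - relLoc π i))
      + ∑ t ∈ Finset.Icc 1 R, (S.filter (fun i => π i ≠ 0 ∧ t ≤ relLoc π i)).card
      = (S.filter (fun i => π i ≠ 0)).card * R := by
  classical
  set S' := S.filter (fun i => π i ≠ 0) with hS'
  have h1 : ∑ i ∈ S, (if π i = 0 then 0 else (dI + 1 - relLoc π i))
      = ∑ i ∈ S', (dI + 1 - relLoc π i) := by
    rw [hS', Finset.sum_filter]
    apply Finset.sum_congr rfl
    intro i _
    by_cases h : π i = 0 <;> simp [h]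
  have h2 : ∀ t, S.filter (fun i => π i ≠ 0 ∧ t ≤ relLoc π i)
      = S'.filter (fun i => t ≤ relLoc π i) := by
    intro t
    rw [hS', Finset.filter_filter]
  have h3 : ∑ t ∈ Finset.Icc 1 R, (S.filter (fun i => π i ≠ 0 ∧ t ≤ relLoc π i)).card
      = ∑ i ∈ S', ((Finset.Icc 1 R).filter (fun t => t ≤ relLoc π i)).card := by
    simp only [h2]
    rw [← sum_card_swap]
  have h4 : ∀ i ∈ S', ((Finset.Icc 1 R).filter (fun t => t ≤ relLoc π i)).card = relLoc π i := by
    intro i hi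
    simp only [hS', Finset.mem_filter] at hi
    obtain ⟨h1', h2'⟩ := hh i hi.1 hi.2
    have : (Finset.Icc 1 R).filter (fun t => t ≤ relLoc π i) = Finset.Icc 1 (relLoc π i) := by
      ext t
      simp only [Finset.mem_filter, Finset.mem_Icc]
      omega
    rw [this, Nat.card_Icc]
    omega
  rw [h1, h3, Finset.sum_congr rfl h4, ← Finset.sum_add_distrib]
  have h5 : ∀ i ∈ S', dI + 1 - relLoc π i + relLoc π i = R := by
    intro i hi
    simp only [hS', Finset.mem_filter] at hi
    obtain ⟨h1', h2'⟩ := hh i hi.1 hi.2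
    omega
  rw [Finset.sum_congr rfl h5, Finset.sum_const, smul_eq_mul]


lemma card_Icc_one (q : ℕ) : (Finset.Icc 1 q).card = q := by
  rw [Nat.card_Icc]
  omega

lemma sStar1_zero (R k : ℕ) : sStar1 R k 0 = 1 := by simp [sStar1]

lemma sStar1_val_R (R k c : ℕ) (hc1 : 1 ≤ c) (hc2 : c ≤ (k - 1) / R) : sStar1 R k c = R := by
  unfold sStar1
  rw [if_neg (by omega), if_pos hc2]

lemma sStar1_val_r (R k : ℕ) : sStar1 R k ((k - 1) / R + 1) = (k - 1) - (k - 1) / R * R := by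
  unfold sStar1
  rw [if_neg (Nat.succ_ne_zero _), if_neg (Nat.not_succ_le_self _), if_pos rfl]

lemma sStar1_val_zero (R k c : ℕ) (h1 : ¬ c = 0) (h2 : ¬ c ≤ (k - 1) / R)
    (h3 : ¬ c = (k - 1) / R + 1) : sStar1 R k c = 0 := by
  unfold sStar1
  rw [if_neg h1, if_neg h2, if_neg h3]

lemma sStar1_le_R (R k c : ℕ) (hR : 1 ≤ R) (hc : 1 ≤ c) : sStar1 R k c ≤ R := by
  have hdm := Nat.div_add_mod (k - 1) R
  have hcm : (k - 1) / R * R = R * ((k - 1) / R) := Nat.mul_comm _ _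
  have hmlt : (k - 1) % R < R := Nat.mod_lt _ (by omega)
  unfold sStar1
  split_ifs with h0 h1 h2
  · omega
  · exact le_refl R
  · omega
  · exact Nat.zero_le R

lemma sStar1_le_first (R k c : ℕ) (hR : 1 ≤ R) (hc : 1 ≤ c) :
    sStar1 R k c ≤ sStar1 R k 1 := by
  by_cases h : 1 ≤ (k - 1) / R
  · rw [sStar1_val_R R k 1 le_rfl h]
    exact sStar1_le_R R k c hR hc
  · have h0 : (k - 1) / R = 0 := by
      generalize hq : (k - 1) / R = q at h
      omega
    by_cases hc1 : c = 1
    · rw [hc1]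
    · rw [sStar1_val_zero R k c (by omega) (by rw [h0]; omega) (by rw [h0]; omega)]
      exact Nat.zero_le _

lemma L1_le_L (L R k : ℕ) (hR : 1 ≤ R) (hk1LR : k - 1 ≤ L * R) : (k - 1) / R ≤ L := by
  have h1 : (k - 1) / R ≤ L * R / R := Nat.div_le_div_right hk1LR
  rwa [Nat.mul_div_cancel L (by omega : 0 < R)] at h1

lemma sum_const_Icc_one (q x : ℕ) : ∑ _c ∈ Finset.Icc 1 q, x = q * x := by
  rw [Finset.sum_const, smul_eq_mul, card_Icc_one]

lemma Nst_ge_full (L R k t : ℕ) (hL1L : (k - 1) / R ≤ L) :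
    (k - 1) / R * (R + 1 - t) ≤ ∑ c ∈ Finset.Icc 1 L, (sStar1 R k c + 1 - t) := by
  have hsub : Finset.Icc 1 ((k - 1) / R) ⊆ Finset.Icc 1 L :=
    Finset.Icc_subset_Icc_right hL1L
  calc (k - 1) / R * (R + 1 - t)
      = ∑ _c ∈ Finset.Icc 1 ((k - 1) / R), (R + 1 - t) := (sum_const_Icc_one _ _).symm
    _ = ∑ c ∈ Finset.Icc 1 ((k - 1) / R), (sStar1 R k c + 1 - t) := by
        apply Finset.sum_congr rfl
        intro c hc
        rw [Finset.mem_Icc] at hc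
        rw [sStar1_val_R R k c hc.1 hc.2]
    _ ≤ _ := Finset.sum_le_sum_of_subset hsub

lemma Nst_ge_full_rem (L R k t : ℕ) (hL1L : (k - 1) / R + 1 ≤ L) :
    (k - 1) / R * (R + 1 - t) + ((k - 1) - (k - 1) / R * R + 1 - t)
      ≤ ∑ c ∈ Finset.Icc 1 L, (sStar1 R k c + 1 - t) := by
  have hsub : Finset.Icc 1 ((k - 1) / R + 1) ⊆ Finset.Icc 1 L :=
    Finset.Icc_subset_Icc_right hL1L
  have hsplit : ∑ c ∈ Finset.Icc 1 ((k - 1) / R + 1), (sStar1 R k c + 1 - t)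
      = ∑ c ∈ Finset.Icc 1 ((k - 1) / R), (sStar1 R k c + 1 - t)
        + (sStar1 R k ((k - 1) / R + 1) + 1 - t) :=
    Finset.sum_Icc_succ_top (Nat.succ_le_succ (Nat.zero_le _)) _
  have h1 : (k - 1) / R * (R + 1 - t)
      = ∑ c ∈ Finset.Icc 1 ((k - 1) / R), (sStar1 R k c + 1 - t) := by
    calc (k - 1) / R * (R + 1 - t)
        = ∑ _c ∈ Finset.Icc 1 ((k - 1) / R), (R + 1 - t) := (sum_const_Icc_one _ _).symm
      _ = _ := by
          apply Finset.sum_congr rfl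
          intro c hc
          rw [Finset.mem_Icc] at hc
          rw [sStar1_val_R R k c hc.1 hc.2]
  calc (k - 1) / R * (R + 1 - t) + ((k - 1) - (k - 1) / R * R + 1 - t)
      ≤ ∑ c ∈ Finset.Icc 1 ((k - 1) / R + 1), (sStar1 R k c + 1 - t) := by
        rw [hsplit, sStar1_val_r, ← h1]
    _ ≤ _ := Finset.sum_le_sum_of_subset hsub


lemma Ct_le_Nst (L R k t : ℕ) (s : ℕ → ℕ) (hR : 2 ≤ R)
    (hk1LR : k - 1 ≤ L * R) (ht : 1 ≤ t) (htR : t ≤ R)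
    (hcap : ∀ c, 1 ≤ c → c ≤ L → s c ≤ R)
    (hsum : ∑ c ∈ Finset.Icc 1 L, s c + s 0 = k) (hs0 : s 0 ≤ 1) :
    ∑ c ∈ Finset.Icc 1 L, (s c + 1 - t) + s 0
      ≤ ∑ c ∈ Finset.Icc 1 L, (sStar1 R k c + 1 - t) + 1 := by
  classical
  have hRpos : 0 < R := by omega
  have hL1L : (k - 1) / R ≤ L := L1_le_L L R k (by omega) hk1LR
  set P := (Finset.Icc 1 L).filter (fun c => t ≤ s c) with hP
  have hPsub : P ⊆ Finset.Icc 1 L := Finset.filter_subset _ _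
  have hCsplit : ∑ c ∈ Finset.Icc 1 L, (s c + 1 - t) = ∑ c ∈ P, (s c + 1 - t) := by
    rw [hP]
    rw [← Finset.sum_filter_add_sum_filter_not (Finset.Icc 1 L) (fun c => t ≤ s c)
      (fun c => s c + 1 - t)]
    have hz : ∑ c ∈ (Finset.Icc 1 L).filter (fun c => ¬ t ≤ s c), (s c + 1 - t) = 0 := by
      apply Finset.sum_eq_zero
      intro c hc
      simp only [Finset.mem_filter] at hc
      omega
    omega
  by_cases hp : P.card ≤ (k - 1) / R
  · have h1 : ∑ c ∈ P, (s c + 1 - t) ≤ P.card * (R + 1 - t) := by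
      calc ∑ c ∈ P, (s c + 1 - t) ≤ ∑ _c ∈ P, (R + 1 - t) := by
            apply Finset.sum_le_sum
            intro c hc
            have hcL := Finset.mem_Icc.mp (hPsub hc)
            have := hcap c hcL.1 hcL.2
            omega
        _ = P.card * (R + 1 - t) := by rw [Finset.sum_const, smul_eq_mul]
    have h2 : P.card * (R + 1 - t) ≤ (k - 1) / R * (R + 1 - t) :=
      Nat.mul_le_mul_right _ hp
    have h3 := Nst_ge_full L R k t hL1L
    generalize hq : (k - 1) / R = q at h2 h3
    omega
  · push_neg at hp
    have hconst : ∑ _c ∈ P, (t - 1) = P.card * (t - 1) := by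
      rw [Finset.sum_const, smul_eq_mul]
    have h1 : ∑ c ∈ P, (s c + 1 - t) + P.card * (t - 1) = ∑ c ∈ P, s c := by
      rw [← hconst, ← Finset.sum_add_distrib]
      apply Finset.sum_congr rfl
      intro c hc
      simp only [hP, Finset.mem_filter] at hc
      omega
    have h2 : ∑ c ∈ P, s c ≤ ∑ c ∈ Finset.Icc 1 L, s c :=
      Finset.sum_le_sum_of_subset hPsub
    have h3 : ((k - 1) / R + 1) * (t - 1) ≤ P.card * (t - 1) :=
      Nat.mul_le_mul_right _ (by omega)
    have key : (k - 1) / R * (R + 1 - t) + ((k - 1) / R + 1) * (t - 1)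
        = (k - 1) / R * R + (t - 1) := by
      have e1 : ((k - 1) / R + 1) * (t - 1) = (k - 1) / R * (t - 1) + (t - 1) := by ring
      have e2 : (k - 1) / R * (R + 1 - t) + (k - 1) / R * (t - 1) = (k - 1) / R * R := by
        rw [← Nat.mul_add]
        congr 1
        omega
      generalize (k - 1) / R = q at e1 e2 ⊢
      omega
    have hdm := Nat.div_add_mod (k - 1) R
    have hcm : (k - 1) / R * R = R * ((k - 1) / R) := Nat.mul_comm _ _
    have hmlt : (k - 1) % R < R := Nat.mod_lt _ hRpos
    by_cases hLL : (k - 1) / R + 1 ≤ L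
    · have h4 := Nst_ge_full_rem L R k t hLL
      generalize hq : (k - 1) / R = q at h1 h2 h3 key hdm hcm h4
      generalize hrr : (k - 1) % R = rr at hdm hmlt
      omega
    · have h4 := Nst_ge_full L R k t hL1L
      have hLeq : (k - 1) / R = L := by
        generalize hq : (k - 1) / R = q at hL1L hLL
        omega
      have h5 : k - 1 ≤ (k - 1) / R * R := by rw [hLeq]; exact hk1LR
      generalize hq : (k - 1) / R = q at h1 h2 h3 key hdm hcm h4 h5
      generalize hrr : (k - 1) % R = rr at hdm hmlt
      omega


lemma sum_dsub_ge (k D m : ℕ) (U : Finset ℕ) (hU : U ⊆ Finset.Icc 1 k) (hm : U.card = m) :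
    ∑ i ∈ Finset.Icc (k + 1 - m) k, (D + 1 - i) ≤ ∑ i ∈ U, (D + 1 - i) := by
  classical
  have hmk : m ≤ k := by
    rw [← hm]
    calc U.card ≤ (Finset.Icc 1 k).card := Finset.card_le_card hU
      _ = k := by rw [Nat.card_Icc]; omega
  have hrepr : ∀ S : Finset ℕ, S ⊆ Finset.Icc 1 k →
      ∑ i ∈ S, (D + 1 - i) = ∑ v ∈ Finset.Icc 1 D, (S.filter (fun i => i ≤ v)).card := by
    intro S hS
    rw [← sum_card_swap S (Finset.Icc 1 D) (fun i v => i ≤ v)]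
    apply Finset.sum_congr rfl
    intro i hi
    have hi' := Finset.mem_Icc.mp (hS hi)
    have he : (Finset.Icc 1 D).filter (fun v => i ≤ v) = Finset.Icc i D := by
      ext v
      simp only [Finset.mem_filter, Finset.mem_Icc]
      omega
    rw [he, Nat.card_Icc]
  have hsfxsub : Finset.Icc (k + 1 - m) k ⊆ Finset.Icc 1 k :=
    Finset.Icc_subset_Icc (by omega) le_rfl
  rw [hrepr U hU, hrepr _ hsfxsub]
  apply Finset.sum_le_sum
  intro v hv
  rw [Finset.mem_Icc] at hv
  have hUsplit := Finset.card_filter_add_card_filter_not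
    (s := U) (p := fun i => i ≤ v)
  have hUgt : (U.filter (fun i => ¬ i ≤ v)).card ≤ k - v := by
    calc (U.filter (fun i => ¬ i ≤ v)).card
        ≤ (Finset.Icc (v + 1) k).card := by
          apply Finset.card_le_card
          intro x hx
          rw [Finset.mem_filter] at hx
          have := Finset.mem_Icc.mp (hU hx.1)
          rw [Finset.mem_Icc]
          omega
      _ = k - v := by rw [Nat.card_Icc]; omega
  have hsfx : ((Finset.Icc (k + 1 - m) k).filter (fun i => i ≤ v)).card = m - (k - v) := by
    by_cases hvk : v ≤ k
    · have he : (Finset.Icc (k + 1 - m) k).filter (fun i => i ≤ v)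
          = Finset.Icc (k + 1 - m) v := by
        ext x
        simp only [Finset.mem_filter, Finset.mem_Icc]
        omega
      rw [he, Nat.card_Icc]
      omega
    · have he : (Finset.Icc (k + 1 - m) k).filter (fun i => i ≤ v)
          = Finset.Icc (k + 1 - m) k := by
        apply Finset.filter_true_of_mem
        intro x hx
        have := Finset.mem_Icc.mp hx
        omega
      rw [he, Nat.card_Icc]
      omega
  rw [hm] at hUsplit
  omega


section PiK
variable (πk : ℕ → ℕ) (L R k : ℕ)
variable (hL : 1 ≤ L) (hR : 2 ≤ R) (hk : 2 ≤ k)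
variable (hz : πk k = 0)
variable (hcl : ∀ i, 1 ≤ i → i ≤ k → πk i ≤ L)
variable (hcount : ∀ c, c ≤ L → ((Finset.Icc 1 k).filter (fun j => πk j = c)).card = sStar1 R k c)
variable (hord : ∀ i j, 1 ≤ i → i < j → j ≤ k → πk i ≠ 0 → πk j ≠ 0 →
    relLoc πk i ≤ relLoc πk j)

include hk hz hcount

lemma pik_sep_filter : (Finset.Icc 1 k).filter (fun i => πk i = 0) = {k} := by
  have hcard : ((Finset.Icc 1 k).filter (fun i => πk i = 0)).card = 1 := by
    rw [hcount 0 (Nat.zero_le L), sStar1_zero]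
  have hmem : k ∈ (Finset.Icc 1 k).filter (fun i => πk i = 0) := by
    simp only [Finset.mem_filter, Finset.mem_Icc]
    exact ⟨⟨by omega, le_rfl⟩, hz⟩
  symm
  apply Finset.eq_of_subset_of_card_le
  · intro x hx
    rw [Finset.mem_singleton] at hx
    rw [hx]
    exact hmem
  · rw [hcard, Finset.card_singleton]

lemma pik_ne_zero : ∀ i, 1 ≤ i → i ≤ k - 1 → πk i ≠ 0 := by
  intro i h1 h2 h0
  have : i ∈ (Finset.Icc 1 k).filter (fun i => πk i = 0) := by
    simp only [Finset.mem_filter, Finset.mem_Icc]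
    exact ⟨⟨h1, by omega⟩, h0⟩
  rw [pik_sep_filter πk L R k hk hz hcount, Finset.mem_singleton] at this
  omega

include hR hcl

lemma relLoc_pik_le_R : ∀ i, 1 ≤ i → i ≤ k → πk i ≠ 0 → relLoc πk i ≤ R := by
  intro i h1 h2 h0
  have hle := relLoc_le_count πk (k := k) h2
  rw [hcount (πk i) (hcl i h1 h2)] at hle
  exact hle.trans (sStar1_le_R R k (πk i) (by omega) (by omega))

/-- total column count for `πk` equals `Nst t`. -/
lemma pik_total_count (t : ℕ) (ht : 1 ≤ t) :
    ((Finset.Icc 1 k).filter (fun i => πk i ≠ 0 ∧ t ≤ relLoc πk i)).card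
      = ∑ c ∈ Finset.Icc 1 L, (sStar1 R k c + 1 - t) := by
  rw [card_filter_fiber πk L k t _ (Finset.Subset.refl _) hcl]
  apply Finset.sum_congr rfl
  intro c hc
  rw [Finset.mem_Icc] at hc
  rw [count_relLoc_ge_eq πk k c t ht, hcount c hc.2]

include hord

/-- the suffix of length m contains at least `min (m-1) (Nst t)` column-t-or-more entries. -/
lemma pik_suffix_count (t m : ℕ) (ht : 1 ≤ t) (hm : m ≤ k) :
    min (m - 1) (∑ c ∈ Finset.Icc 1 L, (sStar1 R k c + 1 - t))
      ≤ ((Finset.Icc (k + 1 - m) k).filter (fun i => πk i ≠ 0 ∧ t ≤ relLoc πk i)).card := by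
  set Nt := ∑ c ∈ Finset.Icc 1 L, (sStar1 R k c + 1 - t) with hNt
  set q := min (m - 1) Nt with hqdef
  have hq1 : q ≤ m - 1 := min_le_left _ _
  have hq2 : q ≤ Nt := min_le_right _ _
  rcases Nat.eq_zero_or_pos q with hq0 | hqpos
  · rw [hq0]; exact Nat.zero_le _
  have hVcard : ((Finset.Icc 1 k).filter (fun i => πk i ≠ 0 ∧ t ≤ relLoc πk i)).card = Nt :=
    pik_total_count πk L R k hR hk hz hcl hcount t ht
  have hsub : Finset.Icc (k - q) (k - 1)
      ⊆ (Finset.Icc (k + 1 - m) k).filter (fun i => πk i ≠ 0 ∧ t ≤ relLoc πk i) := by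
    intro i hi
    rw [Finset.mem_Icc] at hi
    have hi1 : 1 ≤ i := by omega
    have hik1 : i ≤ k - 1 := hi.2
    have hne := pik_ne_zero πk L R k hk hz hcount i hi1 hik1
    refine Finset.mem_filter.mpr ⟨Finset.mem_Icc.mpr ⟨by omega, by omega⟩, hne, ?_⟩
    by_contra hnt
    have hVsub : (Finset.Icc 1 k).filter (fun i => πk i ≠ 0 ∧ t ≤ relLoc πk i)
        ⊆ Finset.Icc (i + 1) (k - 1) := by
      intro j hj
      rw [Finset.mem_filter, Finset.mem_Icc] at hj
      obtain ⟨⟨hj1, hjk⟩, hj0, hjt⟩ := hj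
      have hjk1 : j ≤ k - 1 := by
        rcases Nat.lt_or_ge j k with h | h
        · omega
        · exfalso; apply hj0; have : j = k := by omega
          rw [this]; exact hz
      refine Finset.mem_Icc.mpr ⟨?_, hjk1⟩
      by_contra hji
      have hji' : j ≤ i := by omega
      rcases Nat.lt_or_ge j i with h | h
      · have := hord j i hj1 h (by omega) hj0 hne
        omega
      · have : j = i := by omega
        rw [this] at hjt
        omega
    have hcard := Finset.card_le_card hVsub
    rw [hVcard, Nat.card_Icc] at hcard
    omega
  calc q = (Finset.Icc (k - q) (k - 1)).card := by rw [Nat.card_Icc]; omega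
    _ ≤ _ := Finset.card_le_card hsub

include hL in
/-- the x-bound for `πk`: `i - relLoc πk i ≤ dC` for positions up to `k-1`. -/
lemma pik_x_bound (dI dC : ℕ) (hdI : dI = R - 1) (hkd : k ≤ dI + dC) :
    ∀ i, 1 ≤ i → i ≤ k - 1 → i ≤ relLoc πk i + dC := by
  intro i h1 hik1
  set h := relLoc πk i with hh
  have hne := pik_ne_zero πk L R k hk hz hcount i h1 hik1
  have hpos : 1 ≤ h := relLoc_pos πk h1
  have hVcard := pik_total_count πk L R k hR hk hz hcl hcount (h + 1) (by omega)
  have hVsub : (Finset.Icc 1 k).filter (fun j => πk j ≠ 0 ∧ h + 1 ≤ relLoc πk j)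
      ⊆ Finset.Icc (i + 1) (k - 1) := by
    intro j hj
    rw [Finset.mem_filter, Finset.mem_Icc] at hj
    obtain ⟨⟨hj1, hjk⟩, hj0, hjt⟩ := hj
    have hjk1 : j ≤ k - 1 := by
      rcases Nat.lt_or_ge j k with hlt | hge
      · omega
      · exfalso; apply hj0; have : j = k := by omega
        rw [this]; exact hz
    refine Finset.mem_Icc.mpr ⟨?_, hjk1⟩
    by_contra hji
    rcases Nat.lt_or_ge j i with hlt | hge
    · have := hord j i hj1 hlt (by omega) hj0 hne
      omega
    · have : j = i := by omega
      rw [this] at hjt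
      omega
  have hNle : ∑ c ∈ Finset.Icc 1 L, (sStar1 R k c + 1 - (h + 1)) ≤ k - 1 + 1 - (i + 1) := by
    rw [← hVcard]
    have := Finset.card_le_card hVsub
    rwa [Nat.card_Icc] at this
  have hsingle : sStar1 R k 1 + 1 - (h + 1)
      ≤ ∑ c ∈ Finset.Icc 1 L, (sStar1 R k c + 1 - (h + 1)) := by
    apply Finset.single_le_sum (f := fun c => sStar1 R k c + 1 - (h + 1))
    · intro c _; exact Nat.zero_le _
    · rw [Finset.mem_Icc]; omega
  have hfin : sStar1 R k 1 + 1 - (h + 1) ≤ k - 1 + 1 - (i + 1) := hsingle.trans hNle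
  have hhle : h ≤ sStar1 R k 1 := by
    have hle := relLoc_le_count πk (k := k) (by omega : i ≤ k)
    rw [hcount (πk i) (hcl i h1 (by omega))] at hle
    exact hle.trans (sStar1_le_first R k (πk i) (by omega) (by omega))
  clear hNle hsingle hVcard hVsub
  by_cases hcase : 1 ≤ (k - 1) / R
  · have hs1 : sStar1 R k 1 = R := sStar1_val_R R k 1 le_rfl hcase
    have hRk : R ≤ k - 1 := (Nat.one_le_div_iff (by omega : 0 < R)).mp hcase
    rw [hs1] at hfin hhle
    omega
  · have h0 : (k - 1) / R = 0 := by
      generalize hq : (k - 1) / R = q at hcase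
      omega
    have hs1 : sStar1 R k 1 = k - 1 := by
      have h2 := sStar1_val_r R k
      rw [h0] at h2
      simpa using h2
    rw [hs1] at hfin hhle
    omega

end PiK


/-- in a CSN-DSS with one separate node the system capacity equals
`MC(π^(k))`, i.e. `MC(π^(k)) ≤ MC(π)` for every distribution `s` with `s_0 ∈ {0, 1}` and
every cluster order `π ∈ Π(s)`. -/

theorem stmt7 (L R k dI dC : ℕ) (βI βC α : ℝ)
    (hL : 1 ≤ L) (hR : 2 ≤ R) (hk : 2 ≤ k)
    (hdI : dI = R - 1) (hdC : 1 ≤ dC) (hkd : k ≤ dI + dC)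
    (hβ : βC ≤ βI) (hβC : 0 < βC) (hα : 0 < α)
    (hkLR : k ≤ L * R) (hk1LR : k - 1 ≤ L * R)
    (πk : ℕ → ℕ) (hπk : IsPiJ L R k k πk)
    (s : ℕ → ℕ) (hs : IsDist L R k s) (hs0 : s 0 = 0 ∨ s 0 = 1)
    (π : ℕ → ℕ) (hπ : MemPi L k s π) :
    MC k dI dC βI βC α πk ≤ MC k dI dC βI βC α π := by
  classical
  obtain ⟨hz, ⟨⟨hclk, hcountk⟩, hordk⟩⟩ := hπk
  have hord : ∀ i j, 1 ≤ i → i < j → j ≤ k → πk i ≠ 0 → πk j ≠ 0 →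
      relLoc πk i ≤ relLoc πk j := fun i j a b c d e => (hordk i j a b c d e).1
  obtain ⟨hclπ, hcountπ⟩ := hπ
  obtain ⟨hmono, hcap, hsumtot⟩ := hs
  have hRdI : R = dI + 1 := by omega
  set U := (Finset.Icc 1 k).filter (fun i => weight dI dC βI βC π i ≤ α) with hUdef
  have hUsub : U ⊆ Finset.Icc 1 k := Finset.filter_subset _ _
  set m := U.card with hmdef
  have hmk : m ≤ k := by
    rw [hmdef]
    calc U.card ≤ (Finset.Icc 1 k).card := Finset.card_le_card hUsub
      _ = k := card_Icc_one k
  set sfx := Finset.Icc (k + 1 - m) k with hsfxdef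
  have hsfxsub : sfx ⊆ Finset.Icc 1 k := Finset.Icc_subset_Icc (by omega) le_rfl
  have hsfxcard : sfx.card = m := by rw [hsfxdef, Nat.card_Icc]; omega
  -- sum over clusters of s equals k - s 0
  have hsum' : ∑ c ∈ Finset.Icc 1 L, s c + s 0 = k := by
    have h1 := hsumtot
    rw [Finset.sum_range_succ'] at h1
    have himg : ∑ i ∈ Finset.range L, s (i + 1) = ∑ c ∈ Finset.Icc 1 L, s c := by
      rw [show Finset.Icc 1 L = (Finset.range L).image (· + 1) by
        ext x
        simp only [Finset.mem_Icc, Finset.mem_image, Finset.mem_range]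
        constructor
        · intro hx; exact ⟨x - 1, by omega, by omega⟩
        · rintro ⟨y, hy, rfl⟩; omega]
      rw [Finset.sum_image (by intro a _ b _ h; simp only at h; omega)]
    omega
  -- per-position facts for π on U
  have hrelU : ∀ i ∈ U, π i ≠ 0 → (1 ≤ relLoc π i ∧ relLoc π i ≤ R) := by
    intro i hiU hi0
    have hik := Finset.mem_Icc.mp (hUsub hiU)
    refine ⟨relLoc_pos π hik.1, ?_⟩
    have hle := relLoc_le_count π (k := k) hik.2
    rw [hcountπ (π i) (hclπ i hik.1 hik.2)] at hle
    exact hle.trans (hcap (π i) (by omega) (hclπ i hik.1 hik.2))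
  have hrelS : ∀ i ∈ sfx, πk i ≠ 0 → (1 ≤ relLoc πk i ∧ relLoc πk i ≤ R) := by
    intro i hiS hi0
    have hik := Finset.mem_Icc.mp (hsfxsub hiS)
    exact ⟨relLoc_pos πk hik.1,
      relLoc_pik_le_R πk L R k hR hk hz hclk hcountk i hik.1 hik.2 hi0⟩
  -- E1 : exact decomposition of MC π
  have hE1 : MC k dI dC βI βC α π
      = (∑ i ∈ U, weight dI dC βI βC π i) + ((k - m : ℕ) : ℝ) * α := by
    unfold MC
    rw [← Finset.sum_filter_add_sum_filter_not (Finset.Icc 1 k)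
      (fun i => weight dI dC βI βC π i ≤ α) (fun i => min α (weight dI dC βI βC π i))]
    congr 1
    · apply Finset.sum_congr rfl
      intro i hi
      exact min_eq_right (Finset.mem_filter.mp hi).2
    · have hcardnot : ((Finset.Icc 1 k).filter
          (fun i => ¬ weight dI dC βI βC π i ≤ α)).card = k - m := by
        have hpart := Finset.card_filter_add_card_filter_not
          (s := Finset.Icc 1 k) (p := fun i => weight dI dC βI βC π i ≤ α)
        rw [card_Icc_one, ← hUdef, ← hmdef] at hpart
        omega
      rw [Finset.sum_congr rfl (fun i hi =>
        min_eq_left (le_of_lt (lt_of_not_ge (Finset.mem_filter.mp hi).2)))]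
      rw [Finset.sum_const, hcardnot, nsmul_eq_mul]
  -- E2 : upper bound on MC πk
  have hE2 : MC k dI dC βI βC α πk
      ≤ ((k - m : ℕ) : ℝ) * α + ∑ i ∈ sfx, weight dI dC βI βC πk i := by
    unfold MC
    rw [← Finset.sum_sdiff hsfxsub]
    apply add_le_add
    · calc ∑ i ∈ Finset.Icc 1 k \ sfx, min α (weight dI dC βI βC πk i)
          ≤ ∑ _i ∈ Finset.Icc 1 k \ sfx, α := Finset.sum_le_sum (fun i _ => min_le_left _ _)
        _ = ((k - m : ℕ) : ℝ) * α := by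
            rw [Finset.sum_const, Finset.card_sdiff_of_subset hsfxsub, card_Icc_one, hsfxcard,
              nsmul_eq_mul]
    · exact Finset.sum_le_sum (fun i _ => min_le_right _ _)
  -- per-position upper bound for πk on sfx
  have hWub : ∀ i ∈ sfx, weight dI dC βI βC πk i
      ≤ (βI - βC) * ((if πk i = 0 then 0 else dI + 1 - relLoc πk i : ℕ) : ℝ)
        + ((dI + dC + 1 - i : ℕ) : ℝ) * βC := by
    intro i hiS
    have hik := Finset.mem_Icc.mp (hsfxsub hiS)
    by_cases hi0 : πk i = 0
    · simp only [weight, if_pos hi0]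
      norm_num
    · have hik1 : i ≤ k - 1 := by
        rcases Nat.lt_or_ge i k with h | h
        · omega
        · exfalso; apply hi0; have : i = k := by omega
          rw [this]; exact hz
      have hx := pik_x_bound πk L R k hL hR hk hz hclk hcountk hord dI dC hdI hkd i hik.1 hik1
      have hr1 : 1 ≤ relLoc πk i := relLoc_pos πk hik.1
      have hrle : relLoc πk i ≤ i := relLoc_le_self πk i
      have hrR : relLoc πk i ≤ R := relLoc_pik_le_R πk L R k hR hk hz hclk hcountk i hik.1 hik.2 hi0
      have hab : aCoef dI πk i + bCoef dC πk i ≤ dI + dC + 1 - i := by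
        unfold aCoef bCoef
        omega
      have habR : (aCoef dI πk i : ℝ) + (bCoef dC πk i : ℝ) ≤ ((dI + dC + 1 - i : ℕ) : ℝ) := by
        exact_mod_cast hab
      have key : (aCoef dI πk i : ℝ) * βC + (bCoef dC πk i : ℝ) * βC
          ≤ ((dI + dC + 1 - i : ℕ) : ℝ) * βC := by
        rw [← add_mul]
        exact mul_le_mul_of_nonneg_right habR hβC.le
      have haEq : ((dI + 1 - relLoc πk i : ℕ) : ℝ) = (aCoef dI πk i : ℝ) := rfl
      simp only [weight, if_neg hi0]
      rw [haEq]
      have hexp : (βI - βC) * (aCoef dI πk i : ℝ)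
          = (aCoef dI πk i : ℝ) * βI - (aCoef dI πk i : ℝ) * βC := by ring
      linarith [key, hexp]
  -- per-position lower bound for π on U
  have hWlb : ∀ i ∈ U, (βI - βC) * ((if π i = 0 then 0 else dI + 1 - relLoc π i : ℕ) : ℝ)
        + ((dI + dC + 1 - i : ℕ) : ℝ) * βC ≤ weight dI dC βI βC π i := by
    intro i hiU
    have hik := Finset.mem_Icc.mp (hUsub hiU)
    by_cases hi0 : π i = 0
    · simp only [weight, if_pos hi0]
      norm_num
    · have hr1 : 1 ≤ relLoc π i := relLoc_pos π hik.1
      have hrle : relLoc π i ≤ i := relLoc_le_self π i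
      have hab : dI + dC + 1 - i ≤ aCoef dI π i + bCoef dC π i := by
        unfold aCoef bCoef
        omega
      have habR : ((dI + dC + 1 - i : ℕ) : ℝ) ≤ (aCoef dI π i : ℝ) + (bCoef dC π i : ℝ) := by
        exact_mod_cast hab
      have key : ((dI + dC + 1 - i : ℕ) : ℝ) * βC
          ≤ (aCoef dI π i : ℝ) * βC + (bCoef dC π i : ℝ) * βC := by
        rw [← add_mul]
        exact mul_le_mul_of_nonneg_right habR hβC.le
      have haEq : ((dI + 1 - relLoc π i : ℕ) : ℝ) = (aCoef dI π i : ℝ) := rfl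
      simp only [weight, if_neg hi0]
      rw [haEq]
      have hexp : (βI - βC) * (aCoef dI π i : ℝ)
          = (aCoef dI π i : ℝ) * βI - (aCoef dI π i : ℝ) * βC := by ring
      linarith [key, hexp]
  -- summed versions
  have hE3 : ∑ i ∈ sfx, weight dI dC βI βC πk i
      ≤ (βI - βC) * ((∑ i ∈ sfx, if πk i = 0 then 0 else dI + 1 - relLoc πk i : ℕ) : ℝ)
        + ((∑ i ∈ sfx, (dI + dC + 1 - i) : ℕ) : ℝ) * βC := by
    calc ∑ i ∈ sfx, weight dI dC βI βC πk i
        ≤ ∑ i ∈ sfx, ((βI - βC) * ((if πk i = 0 then 0 else dI + 1 - relLoc πk i : ℕ) : ℝ)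
            + ((dI + dC + 1 - i : ℕ) : ℝ) * βC) := Finset.sum_le_sum hWub
      _ = _ := by
          rw [Finset.sum_add_distrib, ← Finset.mul_sum, ← Finset.sum_mul,
            Nat.cast_sum, Nat.cast_sum]
  have hE4 : (βI - βC) * ((∑ i ∈ U, if π i = 0 then 0 else dI + 1 - relLoc π i : ℕ) : ℝ)
        + ((∑ i ∈ U, (dI + dC + 1 - i) : ℕ) : ℝ) * βC
      ≤ ∑ i ∈ U, weight dI dC βI βC π i := by
    calc (βI - βC) * ((∑ i ∈ U, if π i = 0 then 0 else dI + 1 - relLoc π i : ℕ) : ℝ)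
          + ((∑ i ∈ U, (dI + dC + 1 - i) : ℕ) : ℝ) * βC
        = ∑ i ∈ U, ((βI - βC) * ((if π i = 0 then 0 else dI + 1 - relLoc π i : ℕ) : ℝ)
            + ((dI + dC + 1 - i : ℕ) : ℝ) * βC) := by
          rw [Finset.sum_add_distrib, ← Finset.mul_sum, ← Finset.sum_mul,
            Nat.cast_sum, Nat.cast_sum]
      _ ≤ _ := Finset.sum_le_sum hWlb
  -- ℕ inequality for the d-sums
  have hSD : ∑ i ∈ sfx, (dI + dC + 1 - i) ≤ ∑ i ∈ U, (dI + dC + 1 - i) := by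
    rw [hsfxdef]
    exact sum_dsub_ge k (dI + dC) m U hUsub hmdef.symm
  -- ℕ inequality for the abar-sums  (the main combinatorial step)
  have hGA : (∑ i ∈ sfx, if πk i = 0 then 0 else dI + 1 - relLoc πk i)
      ≤ (∑ i ∈ U, if π i = 0 then 0 else dI + 1 - relLoc π i) := by
    rcases Nat.eq_zero_or_pos m with hm0 | hmpos
    · have hsfxe : sfx = ∅ := by
        rw [hsfxdef, hm0]
        exact Finset.Icc_eq_empty (by omega)
      rw [hsfxe, Finset.sum_empty]
      exact Nat.zero_le _
    have IU := abar_identity π dI R k hRdI U hrelU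
    have IS := abar_identity πk dI R k hRdI sfx hrelS
    -- card of cluster positions in sfx
    have hsfxcl : (sfx.filter (fun i => πk i ≠ 0)).card = m - 1 := by
      have h0f : sfx.filter (fun i => πk i = 0) = {k} := by
        apply Finset.Subset.antisymm
        · intro x hx
          rw [Finset.mem_filter] at hx
          have : x ∈ (Finset.Icc 1 k).filter (fun i => πk i = 0) :=
            Finset.mem_filter.mpr ⟨hsfxsub hx.1, hx.2⟩
          rwa [pik_sep_filter πk L R k hk hz hcountk] at this
        · intro x hx
          rw [Finset.mem_singleton] at hx
          subst hx
          exact Finset.mem_filter.mpr ⟨Finset.mem_Icc.mpr ⟨by omega, le_rfl⟩, hz⟩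
      have hpart := Finset.card_filter_add_card_filter_not
        (s := sfx) (p := fun i => πk i = 0)
      rw [h0f, Finset.card_singleton, hsfxcard] at hpart
      have : (sfx.filter (fun i => ¬ πk i = 0)).card = m - 1 := by omega
      simpa using this
    rw [hsfxcl] at IS
    -- the per-column bounds
    have hcUle : ∀ t, 1 ≤ t → (U.filter (fun i => π i ≠ 0 ∧ t ≤ relLoc π i)).card
        ≤ ∑ c ∈ Finset.Icc 1 L, (s c + 1 - t) := by
      intro t ht
      rw [card_filter_fiber π L k t U hUsub hclπ]
      apply Finset.sum_le_sum
      intro c hc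
      have hb := count_relLoc_ge_le π k c t U hUsub
      rwa [hcountπ c (Finset.mem_Icc.mp hc).2] at hb
    by_cases hex : ∃ p ∈ U, π p = 0
    · -- case A : separate node inside U
      obtain ⟨p, hpU, hp0⟩ := hex
      have hs01 : s 0 = 1 := by
        have hpK : p ∈ (Finset.Icc 1 k).filter (fun i => π i = 0) :=
          Finset.mem_filter.mpr ⟨hUsub hpU, hp0⟩
        have h1 : 1 ≤ ((Finset.Icc 1 k).filter (fun i => π i = 0)).card :=
          Finset.card_pos.mpr ⟨p, hpK⟩
        rw [hcountπ 0 (Nat.zero_le L)] at h1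
        omega
      have hUcl : (U.filter (fun i => π i ≠ 0)).card = m - 1 := by
        obtain ⟨a, ha⟩ := Finset.card_eq_one.mp
          (by rw [hcountπ 0 (Nat.zero_le L), hs01] :
            ((Finset.Icc 1 k).filter (fun i => π i = 0)).card = 1)
        have hUsep : U.filter (fun i => π i = 0) = {p} := by
          apply Finset.Subset.antisymm
          · intro x hx
            rw [Finset.mem_filter] at hx
            have hxa : x ∈ ({a} : Finset ℕ) := by
              rw [← ha]
              exact Finset.mem_filter.mpr ⟨hUsub hx.1, hx.2⟩
            have hpa : p ∈ ({a} : Finset ℕ) := by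
              rw [← ha]
              exact Finset.mem_filter.mpr ⟨hUsub hpU, hp0⟩
            rw [Finset.mem_singleton] at hxa hpa ⊢
            rw [hxa, hpa]
          · intro x hx
            rw [Finset.mem_singleton] at hx
            subst hx
            exact Finset.mem_filter.mpr ⟨hpU, hp0⟩
        have hpart := Finset.card_filter_add_card_filter_not
          (s := U) (p := fun i => π i = 0)
        rw [hUsep, Finset.card_singleton, ← hmdef] at hpart
        have hgoal : (U.filter (fun i => ¬ π i = 0)).card = m - 1 := by omega
        simpa using hgoal
      rw [hUcl] at IU
      have hsum_le : ∑ t ∈ Finset.Icc 1 R, (U.filter (fun i => π i ≠ 0 ∧ t ≤ relLoc π i)).card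
          ≤ ∑ t ∈ Finset.Icc 1 R,
            ((Finset.Icc (k + 1 - m) k).filter (fun i => πk i ≠ 0 ∧ t ≤ relLoc πk i)).card := by
        apply Finset.sum_le_sum
        intro t ht
        rw [Finset.mem_Icc] at ht
        have h1 := hcUle t ht.1
        have h2 := Ct_le_Nst L R k t s hR hk1LR ht.1 ht.2 hcap hsum' (by omega)
        have h3 := pik_suffix_count πk L R k hR hk hz hclk hcountk hord t m ht.1 hmk
        have h4 : (U.filter (fun i => π i ≠ 0 ∧ t ≤ relLoc π i)).card
            ≤ (U.filter (fun i => π i ≠ 0)).card := by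
          apply Finset.card_le_card
          intro x hx
          rw [Finset.mem_filter] at hx ⊢
          exact ⟨hx.1, hx.2.1⟩
        rw [hUcl] at h4
        omega
      rw [← hsfxdef] at hsum_le
      omega
    · -- case B : no separate node in U
      push_neg at hex
      have hUcl : U.filter (fun i => π i ≠ 0) = U := Finset.filter_true_of_mem hex
      rw [hUcl, ← hmdef] at IU
      have hsum_le : ∑ t ∈ Finset.Icc 1 R, (U.filter (fun i => π i ≠ 0 ∧ t ≤ relLoc π i)).card
          ≤ (∑ t ∈ Finset.Icc 1 R,
            ((Finset.Icc (k + 1 - m) k).filter (fun i => πk i ≠ 0 ∧ t ≤ relLoc πk i)).card)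
            + R := by
        have hstep : ∀ t ∈ Finset.Icc 1 R,
            (U.filter (fun i => π i ≠ 0 ∧ t ≤ relLoc π i)).card
            ≤ ((Finset.Icc (k + 1 - m) k).filter
                (fun i => πk i ≠ 0 ∧ t ≤ relLoc πk i)).card + 1 := by
          intro t ht
          rw [Finset.mem_Icc] at ht
          have h1 := hcUle t ht.1
          have h2 := Ct_le_Nst L R k t s hR hk1LR ht.1 ht.2 hcap hsum' (by omega)
          have h3 := pik_suffix_count πk L R k hR hk hz hclk hcountk hord t m ht.1 hmk
          have h4 : (U.filter (fun i => π i ≠ 0 ∧ t ≤ relLoc π i)).card ≤ m := by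
            rw [hmdef]
            exact Finset.card_le_card (Finset.filter_subset _ _)
          omega
        calc ∑ t ∈ Finset.Icc 1 R, (U.filter (fun i => π i ≠ 0 ∧ t ≤ relLoc π i)).card
            ≤ ∑ t ∈ Finset.Icc 1 R,
              (((Finset.Icc (k + 1 - m) k).filter
                (fun i => πk i ≠ 0 ∧ t ≤ relLoc πk i)).card + 1) := Finset.sum_le_sum hstep
          _ = _ := by
              rw [Finset.sum_add_distrib, Finset.sum_const, card_Icc_one, smul_eq_mul,
                mul_one]
      rw [← hsfxdef] at hsum_le
      have hmulR : m * R = (m - 1) * R + R := by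
        have hm1 : m = m - 1 + 1 := by omega
        calc m * R = (m - 1 + 1) * R := by rw [← hm1]
          _ = (m - 1) * R + R := by ring
      omega
  -- final assembly
  have P1 : (βI - βC) * ((∑ i ∈ sfx, if πk i = 0 then 0 else dI + 1 - relLoc πk i : ℕ) : ℝ)
      ≤ (βI - βC) * ((∑ i ∈ U, if π i = 0 then 0 else dI + 1 - relLoc π i : ℕ) : ℝ) := by
    apply mul_le_mul_of_nonneg_left _ (by linarith)
    exact_mod_cast hGA
  have P2 : ((∑ i ∈ sfx, (dI + dC + 1 - i) : ℕ) : ℝ) * βC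
      ≤ ((∑ i ∈ U, (dI + dC + 1 - i) : ℕ) : ℝ) * βC := by
    apply mul_le_mul_of_nonneg_right _ hβC.le
    exact_mod_cast hSD
  linarith [hE1, hE2, hE3, hE4, P1, P2]
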